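/- Let G = (V, E) be a finite connected graph with N vertices, let ε ∈ [0,1) with ε < 1, and let χ = χ(G) be the chromatic number of G. If ε < 1/(χ − 1), then μ_ε(G) = N, i.e., there exists an ε-stable configuration η : V → [0,1] that is injective. -/

import Mathlib

open Set

/-- A configuration `η` is `ε`-stable for the graph `G` if along every edge the
opinions either agree or differ by more than `ε`. -/
def IsStable {V : Type*} (G : SimpleGraph V) (ε : ℝ) (η : V → ℝ) : Prop :=
  ∀ ⦃x y : V⦄, G.Adj x y → η x = η y ∨ ε < |η x - η y|

/-- The `ε`-opinion index of `G`: the maximum number of distinct opinions taken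
by an `ε`-stable configuration `η : V → [0,1]`. -/
noncomputable def opinionIndex {V : Type*} (G : SimpleGraph V) (ε : ℝ) : ℕ :=
  sSup {n : ℕ | ∃ η : V → ℝ,
    (∀ x, η x ∈ Set.Icc (0 : ℝ) 1) ∧ IsStable G ε η ∧ (Set.range η).ncard = n}

private lemma nat_cast_abs_ge_one {a b : ℕ} (hab : a ≠ b) : (1 : ℝ) ≤ |(a : ℝ) - b| := by
  have : ((a : ℤ)) ≠ (b : ℤ) := by exact_mod_cast hab
  have h1 : (1 : ℤ) ≤ |(a : ℤ) - b| := Int.one_le_abs (sub_ne_zero.2 this)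
  have : ((1 : ℤ) : ℝ) ≤ (|(a : ℤ) - b| : ℤ) := by exact_mod_cast h1
  simpa [Int.cast_abs] using this

theorem stmt0 {V : Type*} [Fintype V] (G : SimpleGraph V) (hG : G.Connected)
    (ε : ℝ) (hε0 : 0 ≤ ε) (hε1 : ε < 1) (χ : ℕ) (hχ : G.chromaticNumber = (χ : ℕ∞))
    (h : ε < 1 / ((χ : ℝ) - 1)) :
    opinionIndex G ε = Fintype.card V ∧
      ∃ η : V → ℝ, (∀ x, η x ∈ Set.Icc (0 : ℝ) 1) ∧ IsStable G ε η ∧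
        Function.Injective η := by
  classical
  have hχ2 : 2 ≤ χ := by
    by_contra hc
    push_neg at hc
    interval_cases χ
    · norm_num at h; linarith
    · norm_num at h; linarith
  -- basic real quantities (opaque variables with defining equations)
  obtain ⟨M, hMdef⟩ : ∃ x : ℝ, x = (χ : ℝ) - 1 := ⟨_, rfl⟩
  have hM1 : (1 : ℝ) ≤ M := by
    have : (2 : ℝ) ≤ (χ : ℝ) := by exact_mod_cast hχ2
    rw [hMdef]; linarith
  have hM0 : (0 : ℝ) < M := by linarith
  have hεM : ε * M < 1 := by
    rw [hMdef]
    have h' : ε * ((χ : ℝ) - 1) < (1 / ((χ : ℝ) - 1)) * ((χ : ℝ) - 1) :=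
      mul_lt_mul_of_pos_right h (by rw [← hMdef]; exact hM0)
    rwa [one_div_mul_cancel (by rw [← hMdef]; exact hM0.ne')] at h'
  obtain ⟨δ, hδdef⟩ : ∃ x : ℝ, x = (ε + 1 / M) / 2 := ⟨_, rfl⟩
  have hεM' : ε < 1 / M := by
    rw [lt_div_iff₀ hM0]; exact hεM
  have hδε : ε < δ := by rw [hδdef]; linarith
  have hδ0 : 0 < δ := lt_of_le_of_lt hε0 hδε
  have hδM : δ * M < 1 := by
    have hδlt : δ < 1 / M := by rw [hδdef]; linarith
    calc δ * M < (1 / M) * M := mul_lt_mul_of_pos_right hδlt hM0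
      _ = 1 := one_div_mul_cancel hM0.ne'
  obtain ⟨r, hrdef⟩ : ∃ x : ℝ, x = 1 - δ * M := ⟨_, rfl⟩
  have hr0 : 0 < r := by rw [hrdef]; linarith
  have : Nonempty V := hG.nonempty
  obtain ⟨N, hNdef⟩ : ∃ n : ℕ, n = Fintype.card V := ⟨_, rfl⟩
  have hN0 : 0 < N := hNdef ▸ Fintype.card_pos
  have hN0R : (0 : ℝ) < N := by exact_mod_cast hN0
  obtain ⟨m, hmdef⟩ : ∃ x : ℝ, x = min r (δ - ε) := ⟨_, rfl⟩
  have hm0 : 0 < m := hmdef ▸ lt_min hr0 (by linarith)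
  have hmr : m ≤ r := hmdef ▸ min_le_left _ _
  have hmδε : m ≤ δ - ε := hmdef ▸ min_le_right _ _
  obtain ⟨τ, hτdef⟩ : ∃ x : ℝ, x = m / (2 * N) := ⟨_, rfl⟩
  have hτ0 : 0 < τ := by rw [hτdef]; positivity
  have hNτ : (N : ℝ) * τ = m / 2 := by
    rw [hτdef]; field_simp
  -- the coloring and enumeration
  have hcol : G.Colorable χ := by
    rw [← SimpleGraph.chromaticNumber_le_iff_colorable, hχ]
  obtain ⟨c⟩ := hcol
  obtain ⟨e⟩ : Nonempty (V ≃ Fin N) := by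
    rw [hNdef]; exact ⟨Fintype.equivFin V⟩
  obtain ⟨η, hηdef⟩ : ∃ f : V → ℝ,
      f = fun x => ((c x : ℕ) : ℝ) * δ + ((e x : ℕ) : ℝ) * τ := ⟨_, rfl⟩
  have hηx : ∀ x, η x = ((c x : ℕ) : ℝ) * δ + ((e x : ℕ) : ℝ) * τ := by
    intro x; rw [hηdef]
  have hcle : ∀ x, ((c x : ℕ) : ℝ) ≤ M := by
    intro x
    have hlt : (c x : ℕ) + 1 ≤ χ := (c x).2
    have : ((c x : ℕ) : ℝ) + 1 ≤ (χ : ℝ) := by exact_mod_cast hlt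
    rw [hMdef]; linarith
  have hele : ∀ x, ((e x : ℕ) : ℝ) ≤ (N : ℝ) := by
    intro x
    exact_mod_cast (le_of_lt (e x).2)
  -- η values in [0,1]
  have hmem : ∀ x, η x ∈ Set.Icc (0 : ℝ) 1 := by
    intro x
    rw [hηx x]
    constructor
    · positivity
    · have h1 : ((c x : ℕ) : ℝ) * δ ≤ M * δ :=
        mul_le_mul_of_nonneg_right (hcle x) hδ0.le
      have h2 : ((e x : ℕ) : ℝ) * τ ≤ (N : ℝ) * τ :=
        mul_le_mul_of_nonneg_right (hele x) hτ0.le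
      have h3 : (N : ℝ) * τ ≤ r / 2 := by rw [hNτ]; linarith
      have h4 : M * δ = δ * M := mul_comm M δ
      have h5 : δ * M = 1 - r := by rw [hrdef]; ring
      linarith
  -- big gap along edges
  have hgap : ∀ x y, c x ≠ c y → ε < |η x - η y| := by
    intro x y hcxy
    have h1 : (1 : ℝ) ≤ |((c x : ℕ) : ℝ) - ((c y : ℕ) : ℝ)| :=
      nat_cast_abs_ge_one (fun hh => hcxy (Fin.ext hh))
    have h2 : |(((e x : ℕ) : ℝ) - ((e y : ℕ) : ℝ)) * τ| ≤ (N : ℝ) * τ := by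
      rw [abs_mul, abs_of_pos hτ0]
      apply mul_le_mul_of_nonneg_right _ hτ0.le
      rw [abs_sub_le_iff]
      have hx := hele x; have hy := hele y
      have hx0 : (0:ℝ) ≤ ((e x : ℕ) : ℝ) := by positivity
      have hy0 : (0:ℝ) ≤ ((e y : ℕ) : ℝ) := by positivity
      constructor <;> linarith
    have hsplit : η x - η y =
        (((c x : ℕ) : ℝ) - ((c y : ℕ) : ℝ)) * δ + (((e x : ℕ) : ℝ) - ((e y : ℕ) : ℝ)) * τ := by
      rw [hηx x, hηx y]; ring
    have h3 : δ ≤ |(((c x : ℕ) : ℝ) - ((c y : ℕ) : ℝ)) * δ| := by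
      rw [abs_mul, abs_of_pos hδ0]
      nlinarith [abs_nonneg (((c x : ℕ) : ℝ) - ((c y : ℕ) : ℝ))]
    have h4 : |(((c x : ℕ) : ℝ) - ((c y : ℕ) : ℝ)) * δ| -
        |(((e x : ℕ) : ℝ) - ((e y : ℕ) : ℝ)) * τ| ≤ |η x - η y| := by
      rw [hsplit]
      have := abs_sub_abs_le_abs_sub ((((c x : ℕ) : ℝ) - ((c y : ℕ) : ℝ)) * δ)
        (-((((e x : ℕ) : ℝ) - ((e y : ℕ) : ℝ)) * τ))
      simpa [sub_neg_eq_add] using this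
    have h5 : (N : ℝ) * τ ≤ (δ - ε) / 2 := by rw [hNτ]; linarith
    linarith
  -- stability
  have hstab : IsStable G ε η := by
    intro x y hxy
    right
    exact hgap x y (c.valid hxy)
  -- injectivity
  have hinj : Function.Injective η := by
    intro x y hxy
    by_contra hne
    by_cases hc : c x = c y
    · have hex : e x ≠ e y := fun hh => hne (e.injective hh)
      have h6 : ((e x : ℕ) : ℝ) ≠ ((e y : ℕ) : ℝ) := by
        exact_mod_cast fun hh => hex (Fin.ext hh)
      apply h6
      have h7 : ((c x : ℕ) : ℝ) * δ = ((c y : ℕ) : ℝ) * δ := by rw [hc]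
      have hxy' : ((c x : ℕ) : ℝ) * δ + ((e x : ℕ) : ℝ) * τ
          = ((c y : ℕ) : ℝ) * δ + ((e y : ℕ) : ℝ) * τ := by
        rw [← hηx x, ← hηx y, hxy]
      have h8 : ((e x : ℕ) : ℝ) * τ = ((e y : ℕ) : ℝ) * τ := by linarith
      exact mul_right_cancel₀ hτ0.ne' h8
    · have := hgap x y hc
      rw [hxy, sub_self, abs_zero] at this
      linarith
  refine ⟨?_, η, hmem, hstab, hinj⟩
  -- opinion index computation
  have hNmem : Fintype.card V ∈ {n : ℕ | ∃ η : V → ℝ,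
      (∀ x, η x ∈ Set.Icc (0 : ℝ) 1) ∧ IsStable G ε η ∧ (Set.range η).ncard = n} := by
    refine ⟨η, hmem, hstab, ?_⟩
    rw [← Nat.card_coe_set_eq, Nat.card_range_of_injective hinj,
      Nat.card_eq_fintype_card]
  have hub : ∀ n ∈ {n : ℕ | ∃ η : V → ℝ,
      (∀ x, η x ∈ Set.Icc (0 : ℝ) 1) ∧ IsStable G ε η ∧ (Set.range η).ncard = n},
      n ≤ Fintype.card V := by
    rintro n ⟨f, -, -, rfl⟩
    have himg : Set.range f = f '' Set.univ := by rw [Set.image_univ]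
    rw [himg]
    calc (f '' Set.univ).ncard ≤ (Set.univ : Set V).ncard :=
          Set.ncard_image_le Set.finite_univ
      _ = Fintype.card V := by rw [Set.ncard_univ, Nat.card_eq_fintype_card]
  apply le_antisymm
  · exact csSup_le ⟨_, hNmem⟩ hub
  · exact le_csSup ⟨_, hub⟩ hNmem
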